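/- The series ∑_{k ∈ ℤ, k ≠ 0} Γ(1 + 2kπi/log 2) · u^(−1 − 2kπi/log 2) converges absolutely for every real u > 0, and its sum is real. -/

import Mathlib

open Complex Real ComplexConjugate

set_option maxHeartbeats 1000000

lemma sinh_lb {x : ℝ} (hx : 0 ≤ x) : x ^ 5 / 240 ≤ Real.sinh x := by
  have h := Real.sum_le_exp_of_nonneg hx 6
  norm_num [Finset.sum_range_succ, Nat.factorial] at h
  have h2 : Real.exp (-x) ≤ 1 := Real.exp_le_one_iff.2 (by linarith)
  rw [Real.sinh_eq]
  nlinarith [pow_nonneg hx 2, pow_nonneg hx 3, pow_nonneg hx 4]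

lemma gamma_sq (t : ℝ) (ht : t ≠ 0) :
    ‖Complex.Gamma (1 + t * Complex.I)‖ ^ 2 = π * t / Real.sinh (π * t) := by
  have hne : (t : ℂ) * Complex.I ≠ 0 := by
    simp [Complex.ext_iff, ht]
  have h1 : Complex.Gamma (1 + t * Complex.I) = (t * Complex.I) * Complex.Gamma (t * Complex.I) := by
    rw [show (1 : ℂ) + t * Complex.I = t * Complex.I + 1 by ring, Complex.Gamma_add_one _ hne]
  have h2 := Complex.Gamma_mul_Gamma_one_sub ((t : ℂ) * Complex.I)
  have h3 : Complex.Gamma (1 - t * Complex.I) = conj (Complex.Gamma (1 + t * Complex.I)) := by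
    rw [← Complex.Gamma_conj]
    congr 1
    simp [Complex.ext_iff]
  have hsin : Complex.sin (π * ((t : ℂ) * Complex.I)) = (Real.sinh (π * t) : ℂ) * Complex.I := by
    rw [show (π : ℂ) * ((t : ℂ) * Complex.I) = ((π * t : ℝ) : ℂ) * Complex.I by push_cast; ring,
      Complex.sin_mul_I, Complex.ofReal_sinh]
  have hsh : Real.sinh (π * t) ≠ 0 := Real.sinh_ne_zero.2 (mul_ne_zero Real.pi_ne_zero ht)
  have key : ((‖Complex.Gamma (1 + t * Complex.I)‖ ^ 2 : ℝ) : ℂ)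
      = ((π * t / Real.sinh (π * t) : ℝ) : ℂ) := by
    rw [Complex.sq_norm, ← Complex.mul_conj]
    nth_rewrite 1 [h1]
    rw [← h3]
    rw [mul_assoc, h2, hsin]
    have hs : ((Real.sinh (π * t) : ℝ) : ℂ) ≠ 0 := by exact_mod_cast hsh
    have hI : Complex.I ≠ 0 := Complex.I_ne_zero
    push_cast
    field_simp
  exact_mod_cast key

def negEquiv : {k : ℤ // k ≠ 0} ≃ {k : ℤ // k ≠ 0} :=
  ⟨fun k => ⟨-k.1, neg_ne_zero.2 k.2⟩, fun k => ⟨-k.1, neg_ne_zero.2 k.2⟩,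
    fun k => by simp, fun k => by simp⟩

lemma gamma_bound (t : ℝ) (ht : t ≠ 0) :
    ‖Complex.Gamma (1 + t * Complex.I)‖ ≤ 16 / (π * t) ^ 2 := by
  have heven : π * t / Real.sinh (π * t) = π * |t| / Real.sinh (π * |t|) := by
    rcases abs_choice t with h | h
    · rw [h]
    · rw [h, show π * -t = -(π * t) by ring, Real.sinh_neg, neg_div_neg_eq]
  have hsq := gamma_sq t ht
  have habs : 0 < π * |t| := mul_pos Real.pi_pos (abs_pos.2 ht)
  have hlb := sinh_lb habs.le
  have hsinh : 0 < Real.sinh (π * |t|) := Real.sinh_pos_iff.2 habs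
  have hub : ‖Complex.Gamma (1 + t * Complex.I)‖ ^ 2 ≤ 240 / (π * |t|) ^ 4 := by
    rw [hsq, heven]
    rw [div_le_div_iff₀ hsinh (by positivity)]
    calc π * |t| * (π * |t|) ^ 4 = (π * |t|) ^ 5 / 240 * 240 := by ring
    _ ≤ Real.sinh (π * |t|) * 240 := by nlinarith
    _ = 240 * Real.sinh (π * |t|) := by ring
  have h4 : (π * t) ^ 2 = (π * |t|) ^ 2 := by
    rcases abs_choice t with h | h <;> rw [h] <;> ring
  rw [h4]
  calc ‖Complex.Gamma (1 + t * Complex.I)‖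
      = Real.sqrt (‖Complex.Gamma (1 + t * Complex.I)‖ ^ 2) :=
        (Real.sqrt_sq (norm_nonneg _)).symm
    _ ≤ Real.sqrt ((16 / (π * |t|) ^ 2) ^ 2) := by
        apply Real.sqrt_le_sqrt
        calc ‖Complex.Gamma (1 + t * Complex.I)‖ ^ 2 ≤ 240 / (π * |t|) ^ 4 := hub
          _ ≤ (16 / (π * |t|) ^ 2) ^ 2 := by
              rw [div_pow, show (((π * |t|) ^ 2) ^ 2 : ℝ) = (π * |t|) ^ 4 by ring]
              gcongr
              norm_num
    _ = 16 / (π * |t|) ^ 2 := Real.sqrt_sq (by positivity)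

theorem stmt_9 (u : ℝ) (hu : 0 < u) :
    Summable (fun k : {k : ℤ // k ≠ 0} =>
      ‖Complex.Gamma (1 + 2 * (k.1 : ℂ) * Real.pi * Complex.I / Real.log 2) *
          (u : ℂ) ^ (-1 - 2 * (k.1 : ℂ) * Real.pi * Complex.I / Real.log 2)‖) ∧
    (∑' k : {k : ℤ // k ≠ 0},
      Complex.Gamma (1 + 2 * (k.1 : ℂ) * Real.pi * Complex.I / Real.log 2) *
        (u : ℂ) ^ (-1 - 2 * (k.1 : ℂ) * Real.pi * Complex.I / Real.log 2)).im = 0 := by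
  have hL : (0 : ℝ) < Real.log 2 := Real.log_pos one_lt_two
  set L := Real.log 2 with hLdef
  -- real frequency
  have hrw : ∀ k : ℤ, 2 * (k : ℂ) * (π : ℂ) * Complex.I / (L : ℂ)
      = ((2 * π * k / L : ℝ) : ℂ) * Complex.I := by
    intro k; push_cast; ring
  have htne : ∀ k : ℤ, k ≠ 0 → (2 * π * k / L : ℝ) ≠ 0 := by
    intro k hk
    have : (k : ℝ) ≠ 0 := Int.cast_ne_zero.2 hk
    positivity
  have hnorm : ∀ k : {k : ℤ // k ≠ 0},
      ‖Complex.Gamma (1 + 2 * (k.1 : ℂ) * Real.pi * Complex.I / Real.log 2) *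
        (u : ℂ) ^ (-1 - 2 * (k.1 : ℂ) * Real.pi * Complex.I / Real.log 2)‖
      = ‖Complex.Gamma (1 + ((2 * π * k.1 / L : ℝ) : ℂ) * Complex.I)‖ * u ^ (-1 : ℝ) := by
    intro k
    rw [norm_mul, hrw k.1]
    congr 1
    rw [Complex.norm_cpow_eq_rpow_re_of_pos hu]
    congr 1
    simp
  have hsummable : Summable (fun k : {k : ℤ // k ≠ 0} =>
      ‖Complex.Gamma (1 + 2 * (k.1 : ℂ) * Real.pi * Complex.I / Real.log 2) *
          (u : ℂ) ^ (-1 - 2 * (k.1 : ℂ) * Real.pi * Complex.I / Real.log 2)‖) := by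
    have hS : Summable (fun k : ℤ => (1 : ℝ) / (k : ℝ) ^ 2) :=
      summable_one_div_int_pow.2 one_lt_two
    have hS2 : Summable (fun k : {k : ℤ // k ≠ 0} => (1 : ℝ) / (k.1 : ℝ) ^ 2) :=
      hS.subtype {k : ℤ | k ≠ 0}
    refine Summable.of_nonneg_of_le (fun k => norm_nonneg _) ?_
      (hS2.mul_left (16 * L ^ 2 / (2 * π * π) ^ 2 * u ^ (-1 : ℝ)))
    · intro k
      rw [hnorm k]
      have hb := gamma_bound _ (htne k.1 k.2)
      have hk2 : (0 : ℝ) < (k.1 : ℝ) ^ 2 := by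
        have : (k.1 : ℝ) ≠ 0 := Int.cast_ne_zero.2 k.2
        positivity
      have hπ : (π : ℝ) ≠ 0 := Real.pi_ne_zero
      have hLne : L ≠ 0 := hL.ne'
      have hkne : (k.1 : ℝ) ≠ 0 := Int.cast_ne_zero.2 k.2
      have heq : 16 / (π * (2 * π * k.1 / L)) ^ 2
          = 16 * L ^ 2 / (2 * π * π) ^ 2 * (1 / (k.1 : ℝ) ^ 2) := by
        field_simp
      calc ‖Complex.Gamma (1 + ((2 * π * k.1 / L : ℝ) : ℂ) * Complex.I)‖ * u ^ (-1 : ℝ)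
          ≤ 16 / (π * (2 * π * k.1 / L)) ^ 2 * u ^ (-1 : ℝ) := by
            apply mul_le_mul_of_nonneg_right hb (Real.rpow_nonneg hu.le _)
        _ = 16 * L ^ 2 / (2 * π * π) ^ 2 * u ^ (-1 : ℝ) * (1 / (k.1 : ℝ) ^ 2) := by
            rw [heq]; ring
  refine ⟨hsummable, ?_⟩
  set f : {k : ℤ // k ≠ 0} → ℂ := fun k =>
    Complex.Gamma (1 + 2 * (k.1 : ℂ) * Real.pi * Complex.I / Real.log 2) *
      (u : ℂ) ^ (-1 - 2 * (k.1 : ℂ) * Real.pi * Complex.I / Real.log 2) with hf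
  have hsf : Summable f := hsummable.of_norm
  have hconj : ∀ k, conj (f k) = f (negEquiv k) := by
    intro k
    have harg : Complex.arg (u : ℂ) ≠ π := by
      rw [Complex.arg_ofReal_of_nonneg hu.le]
      exact (Real.pi_ne_zero).symm
    simp only [hf, negEquiv, Equiv.coe_fn_mk, map_mul]
    have hcu : conj ((u : ℂ)) = (u : ℂ) := by simp [Complex.conj_ofReal]
    have hcpow : ∀ m : ℂ, conj ((u : ℂ) ^ m) = (u : ℂ) ^ (conj m) := by
      intro m
      rw [show (u : ℂ) ^ m = conj (u : ℂ) ^ m by rw [hcu],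
        Complex.conj_cpow _ _ harg, conj_conj]
    rw [← Complex.Gamma_conj, hcpow]
    have he1 : conj (1 + 2 * (k.1 : ℂ) * (π : ℂ) * Complex.I / (L : ℂ))
        = 1 + 2 * ((-k.1 : ℤ) : ℂ) * (π : ℂ) * Complex.I / (L : ℂ) := by
      simp only [map_add, map_div₀, map_mul, map_one, Complex.conj_I, Complex.conj_ofReal,
        map_intCast, map_ofNat]
      push_cast; ring
    have he2 : conj (-1 - 2 * (k.1 : ℂ) * (π : ℂ) * Complex.I / (L : ℂ))
        = -1 - 2 * ((-k.1 : ℤ) : ℂ) * (π : ℂ) * Complex.I / (L : ℂ) := by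
      simp only [map_sub, map_div₀, map_mul, map_one, map_neg, Complex.conj_I,
        Complex.conj_ofReal, map_intCast, map_ofNat]
      push_cast; ring
    rw [he1, he2]
  have hconj_tsum : conj (∑' k, f k) = ∑' k, f k := by
    calc conj (∑' k, f k) = ∑' k, conj (f k) :=
          Complex.conjCLE.toContinuousLinearMap.map_tsum hsf
      _ = ∑' k, f (negEquiv k) := by simp_rw [hconj]
      _ = ∑' k, f k := negEquiv.tsum_eq f
  exact Complex.conj_eq_iff_im.1 hconj_tsum
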